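/- arXiv:1812.06206 — 2 statements merged into one kernel-verified Lean document; each statement's English description precedes it below -/
import Mathlib

section
/- Let k be a commutative unital ring, D = (D_0, D_1, …) a Hasse–Schmidt derivation of k, and F a formal group law over k. Suppose D is an HS F-derivation, i.e. Σ_{i,j≥0} D_j(D_i(u)) X^i Y^j = Σ_{n≥0} D_n(u) · F(X,Y)^n in k[[X,Y]] for all u ∈ k. Then defining Y(u,z)v := Σ_{n≥0} D_n(u) v z^n, the weak associativity identity Y(Y(a,z)b, w)c = Y(a, F(z,w)) Y(b,w) c holds in k[[z,w]] for all a, b, c ∈ k. -/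
namespace HS
variable {k : Type*} [CommRing k] {σ : Type*}

/-- A Hasse-Schmidt derivation of `k`: a sequence of additive endomorphisms with
`D 0 = id`, `D m 1 = 0` for `m ≥ 1`, and the Leibniz rule. -/
structure IsHSDer (D : ℕ → k → k) : Prop where
  add : ∀ n u v, D n (u + v) = D n u + D n v
  zeroth : ∀ u, D 0 u = u
  map_one : ∀ m, 1 ≤ m → D m 1 = 0
  leibniz : ∀ m u v, D m (u * v) = ∑ p ∈ Finset.HasAntidiagonal.antidiagonal m, D p.1 u * D p.2 v

/-- Iterativity: `D i ∘ D j = C(i+j, i) • D (i+j)`. -/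
def Iterative (D : ℕ → k → k) : Prop :=
  ∀ i j u, D i (D j u) = (i + j).choose i • D (i + j) u

/-- The series `Σ_n (c n) • G^n` for `G` of zero constant term, defined coefficientwise. -/
noncomputable def ssum (c : ℕ → k) (G : MvPowerSeries σ k) : MvPowerSeries σ k :=
  fun d => ∑ n ∈ Finset.range ((d.sum fun _ m => m) + 1),
    c n * MvPowerSeries.coeff d (G ^ n)

/-- `D` is an HS `F`-derivation:
`Σ_{i,j} D_j (D_i u) X^i Y^j = Σ_n (D_n u) F(X,Y)^n` for all `u`. -/
def IsFDer (D : ℕ → k → k) (F : MvPowerSeries (Fin 2) k) : Prop :=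
  ∀ u : k, (fun d : Fin 2 →₀ ℕ => D (d 1) (D (d 0) u)) = ssum (fun n => D n u) F

/-- View a coefficient function as a multivariate power series. -/
def ofFun (f : (Fin 2 →₀ ℕ) → k) : MvPowerSeries (Fin 2) k := f

/-- If D is an HS F-derivation then the vertex operators Y(u,z)v = Σ_n D_n(u) v z^n satisfy
weak associativity Y(Y(a,z)b,w)c = Y(a, F(z,w)) Y(b,w) c in k[[z,w]]. -/
theorem fder_implies_weak_assoc {k : Type*} [CommRing k] (D : ℕ → k → k)
    (hD : IsHSDer D) (F : MvPowerSeries (Fin 2) k)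
    (hzero : MvPowerSeries.constantCoeff F = 0)
    (hFder : IsFDer D F) :
    ∀ a b c : k,
      ofFun (fun d : Fin 2 →₀ ℕ => D (d 1) (D (d 0) a * b) * c)
        = ssum (fun n => D n a) F *
          ofFun (fun d : Fin 2 →₀ ℕ => if d 0 = 0 then D (d 1) b * c else 0) := by
  intro a b c
  funext d
  have hR : (ssum (fun n => D n a) F *
      ofFun (fun d : Fin 2 →₀ ℕ => if d 0 = 0 then D (d 1) b * c else 0)) d
      = ∑ p ∈ Finset.HasAntidiagonal.antidiagonal d,
          (ssum (fun n => D n a) F) p.1 *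
            (if p.2 0 = 0 then D (p.2 1) b * c else 0) :=
    MvPowerSeries.coeff_mul d _ _
  have hL : ofFun (fun d : Fin 2 →₀ ℕ => D (d 1) (D (d 0) a * b) * c) d
      = ∑ q ∈ Finset.HasAntidiagonal.antidiagonal (d 1), D q.1 (D (d 0) a) * D q.2 b * c := by
    show D (d 1) (D (d 0) a * b) * c = _
    rw [hD.leibniz, Finset.sum_mul]
  rw [hL, hR]
  simp only [← hFder a]
  -- pull the `if` out and restrict to the support
  have hsplit : ∀ p : (Fin 2 →₀ ℕ) × (Fin 2 →₀ ℕ),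
      D (p.1 1) (D (p.1 0) a) * (if p.2 0 = 0 then D (p.2 1) b * c else 0)
      = if p.2 0 = 0 then D (p.1 1) (D (p.1 0) a) * (D (p.2 1) b * c) else 0 := by
    intro p; split <;> simp
  simp only [hsplit]
  rw [← Finset.sum_filter]
  refine Finset.sum_nbij' (i := fun q => (d - Finsupp.single 1 q.2, Finsupp.single 1 q.2))
    (j := fun p => (p.1 1, p.2 1)) ?_ ?_ ?_ ?_ ?_
  · intro q hq
    rw [Finset.HasAntidiagonal.mem_antidiagonal] at hq
    have hle : Finsupp.single (1 : Fin 2) q.2 ≤ d := by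
      rw [Finsupp.single_le_iff]; omega
    simp only [Finset.mem_filter, Finset.HasAntidiagonal.mem_antidiagonal]
    constructor
    · exact tsub_add_cancel_of_le hle
    · simp [Finsupp.single_apply]
  · intro p hp
    simp only [Finset.mem_filter, Finset.HasAntidiagonal.mem_antidiagonal] at hp
    rw [Finset.HasAntidiagonal.mem_antidiagonal]
    have := DFunLike.congr_fun hp.1 1
    simpa [Finsupp.add_apply] using this
  · intro q hq
    rw [Finset.HasAntidiagonal.mem_antidiagonal] at hq
    simp only
    ext
    · simp [Finsupp.tsub_apply, Finsupp.single_apply]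
      omega
    · simp
  · intro p hp
    simp only [Finset.mem_filter, Finset.HasAntidiagonal.mem_antidiagonal] at hp
    have h2 : Finsupp.single (1 : Fin 2) (p.2 1) = p.2 := by
      ext x
      fin_cases x
      · simp [Finsupp.single_apply, hp.2]
      · simp [Finsupp.single_apply]
    have h1 : d - p.2 = p.1 := by
      ext x
      have := DFunLike.congr_fun hp.1 x
      simp only [Finsupp.add_apply] at this
      simp [Finsupp.tsub_apply]
      omega
    simp [h2, h1]
  · intro q hq
    rw [Finset.HasAntidiagonal.mem_antidiagonal] at hq
    have e1 : (d - Finsupp.single (1 : Fin 2) q.2) 1 = q.1 := by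
      simp [Finsupp.tsub_apply, Finsupp.single_apply]; omega
    have e0 : (d - Finsupp.single (1 : Fin 2) q.2) 0 = d 0 := by
      simp [Finsupp.tsub_apply, Finsupp.single_apply]
    simp [e1, e0, Finsupp.single_apply, mul_assoc]

end HS
end

section
/- Let k be a commutative unital ring and D = (D_0, D_1, …) an iterative Hasse–Schmidt derivation of k. Define vertex operators Y(u,z)v := Σ_{n≥0} D_n(u)v z^n for u,v ∈ k. Then the 'skew-symmetry with translation' identity holds: Y(a,z)b = Σ_{n≥0} D_n( Y(b,−z)a evaluated coefficientwise ) z^n in the sense that Σ_{m≥0} D_m(a) b z^m = Σ_{n≥0} z^n Σ_{i+j=n} (−1)^j D_i( D_j(b) a ), for all a, b ∈ k. -/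
namespace HS
variable {k : Type*} [CommRing k] {σ : Type*}

/-- The alternating binomial sum in an arbitrary commutative ring. -/
lemma alt_sum {k : Type*} [CommRing k] (s : ℕ) :
    (∑ j ∈ Finset.range (s + 1), (-1 : k) ^ j * (s.choose j : k))
      = if s = 0 then 1 else 0 := by
  have h := Int.alternating_sum_range_choose (n := s)
  have h2 := congrArg (fun z : ℤ => (z : k)) h
  push_cast at h2
  simpa using h2

/-- Reindex a triple antidiagonal sum: regroup `p + q + j = m` by `p + j` instead
of `p + q`. -/
lemma tri_reindex {k : Type*} [AddCommMonoid k] (m : ℕ) (f : ℕ → ℕ → ℕ → k) :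
    (∑ x ∈ Finset.HasAntidiagonal.antidiagonal m, ∑ y ∈ Finset.HasAntidiagonal.antidiagonal x.1, f y.1 y.2 x.2)
      = ∑ x ∈ Finset.HasAntidiagonal.antidiagonal m, ∑ y ∈ Finset.HasAntidiagonal.antidiagonal x.1, f y.1 x.2 y.2 := by
  rw [Finset.sum_sigma', Finset.sum_sigma']
  refine Finset.sum_bij' (fun a _ => ⟨(a.2.1 + a.1.2, a.2.2), (a.2.1, a.1.2)⟩)
    (fun a _ => ⟨(a.2.1 + a.1.2, a.2.2), (a.2.1, a.1.2)⟩) ?_ ?_ ?_ ?_ ?_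
  · rintro ⟨⟨i, j⟩, ⟨p, q⟩⟩ ha
    simp only [Finset.mem_sigma, Finset.HasAntidiagonal.mem_antidiagonal] at ha ⊢
    exact ⟨by omega, trivial⟩
  · rintro ⟨⟨i, j⟩, ⟨p, q⟩⟩ ha
    simp only [Finset.mem_sigma, Finset.HasAntidiagonal.mem_antidiagonal] at ha ⊢
    exact ⟨by omega, trivial⟩
  · rintro ⟨⟨i, j⟩, ⟨p, q⟩⟩ ha
    simp only [Finset.mem_sigma, Finset.HasAntidiagonal.mem_antidiagonal] at ha
    simp only [Sigma.mk.inj_iff, Prod.mk.injEq, heq_eq_eq]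
    refine ⟨⟨by omega, trivial⟩, by simp⟩
  · rintro ⟨⟨i, j⟩, ⟨p, q⟩⟩ ha
    simp only [Finset.mem_sigma, Finset.HasAntidiagonal.mem_antidiagonal] at ha
    simp only [Sigma.mk.inj_iff, Prod.mk.injEq, heq_eq_eq]
    refine ⟨⟨by omega, trivial⟩, by simp⟩
  · rintro ⟨⟨i, j⟩, ⟨p, q⟩⟩ _
    rfl

/-- Skew-symmetry for the vertex ring (k, D) attached to an iterative Hasse-Schmidt
derivation: Σ_m D_m(a) b z^m = Σ_n z^n Σ_{i+j=n} (-1)^j D_i(D_j(b) a) in k[[z]]. -/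
theorem skew_symmetry {k : Type*} [CommRing k] (D : ℕ → k → k)
    (hD : IsHSDer D) (hit : Iterative D) (a b : k) :
    PowerSeries.mk (fun m => D m a * b)
      = PowerSeries.mk (fun n => ∑ p ∈ Finset.HasAntidiagonal.antidiagonal n,
          (-1 : k) ^ p.2 * D p.1 (D p.2 b * a)) := by
  ext m
  simp only [PowerSeries.coeff_mk]
  symm
  have h1 : ∀ x ∈ Finset.HasAntidiagonal.antidiagonal m,
      (-1 : k) ^ x.2 * D x.1 (D x.2 b * a)
        = ∑ y ∈ Finset.HasAntidiagonal.antidiagonal x.1,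
            (-1 : k) ^ x.2 * (((y.1 + x.2).choose y.1 : k) * D (y.1 + x.2) b * D y.2 a) := by
    intro x _
    rw [hD.leibniz, Finset.mul_sum]
    refine Finset.sum_congr rfl fun y _ => ?_
    rw [hit y.1 x.2 b, nsmul_eq_mul]
  rw [Finset.sum_congr rfl h1]
  rw [tri_reindex m (fun p q j => (-1 : k) ^ j * (((p + j).choose p : k) * D (p + j) b * D q a))]
  have h2 : ∀ x ∈ Finset.HasAntidiagonal.antidiagonal m,
      (∑ y ∈ Finset.HasAntidiagonal.antidiagonal x.1,
          (-1 : k) ^ y.2 * (((y.1 + y.2).choose y.1 : k) * D (y.1 + y.2) b * D x.2 a))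
        = (if x.1 = 0 then 1 else 0) * (D x.1 b * D x.2 a) := by
    intro x _
    have hs : ∀ y ∈ Finset.HasAntidiagonal.antidiagonal x.1,
        (-1 : k) ^ y.2 * (((y.1 + y.2).choose y.1 : k) * D (y.1 + y.2) b * D x.2 a)
          = ((-1 : k) ^ y.2 * (x.1.choose y.1 : k)) * (D x.1 b * D x.2 a) := by
      intro y hy
      rw [Finset.HasAntidiagonal.mem_antidiagonal] at hy
      rw [hy]
      ring
    rw [Finset.sum_congr rfl hs, ← Finset.sum_mul]
    congr 1
    rw [Finset.Nat.sum_antidiagonal_eq_sum_range_succ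
      (fun p j => (-1 : k) ^ j * (x.1.choose p : k))]
    have key : ∀ p ∈ Finset.range (x.1 + 1),
        (-1 : k) ^ (x.1 - p) * (x.1.choose p : k)
          = (-1 : k) ^ x.1 * ((-1 : k) ^ p * (x.1.choose p : k)) := by
      intro p hp
      rw [Finset.mem_range] at hp
      have hple : p ≤ x.1 := Nat.lt_succ_iff.mp hp
      have : (-1 : k) ^ (x.1 - p) * (-1 : k) ^ p = (-1 : k) ^ x.1 := by
        rw [← pow_add, Nat.sub_add_cancel hple]
      have h4 : (-1 : k) ^ (x.1 - p) = (-1 : k) ^ x.1 * (-1 : k) ^ p := by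
        have hsq : ((-1 : k) ^ p) * ((-1 : k) ^ p) = 1 := by
          rw [← pow_add, ← two_mul, pow_mul]; simp
        calc (-1 : k) ^ (x.1 - p) = (-1 : k) ^ (x.1 - p) * (((-1 : k) ^ p) * ((-1 : k) ^ p)) := by
              rw [hsq, mul_one]
          _ = ((-1 : k) ^ (x.1 - p) * (-1 : k) ^ p) * (-1 : k) ^ p := by ring
          _ = (-1 : k) ^ x.1 * (-1 : k) ^ p := by rw [this]
      rw [h4]; ring
    rw [Finset.sum_congr rfl key, ← Finset.mul_sum, alt_sum]
    rcases Nat.eq_zero_or_pos x.1 with h | h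
    · simp [h]
    · simp [Nat.pos_iff_ne_zero.mp h]
  rw [Finset.sum_congr rfl h2]
  rw [Finset.sum_eq_single (0, m)]
  · simp [hD.zeroth, mul_comm]
  · rintro ⟨s, q⟩ hmem hne
    rw [Finset.HasAntidiagonal.mem_antidiagonal] at hmem
    have hs : s ≠ 0 := by
      rintro rfl
      exact hne (by simpa using congrArg (Prod.mk 0) hmem)
    simp [hs]
  · intro h
    exact absurd (by simp : ((0 : ℕ), m) ∈ Finset.HasAntidiagonal.antidiagonal m) h

end HS
end
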